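/- Fix N ≥ 1, m ≥ 1, and 0 ≤ b ≤ m. Among all q ∈ [0,1]^m with Σ q_i = b, the effective transaction throughput Θ_tx(q) = Σ_{i=1}^m (1 - (1-q_i)^N) is maximized by the uniform vector q_i = b/m for all i. -/

import Mathlib

theorem uniform_maximizes_tx_throughput (N m b : ℕ) (hN : 1 ≤ N) (hm : 1 ≤ m) (hbm : b ≤ m)
    (q : Fin m → ℝ) (hq01 : ∀ i, q i ∈ Set.Icc (0 : ℝ) 1) (hqsum : ∑ i, q i = b) :
    ∑ i, (1 - (1 - q i) ^ N) ≤ ∑ _i : Fin m, (1 - (1 - (b : ℝ) / m) ^ N) := by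
  have hm0 : (0 : ℝ) < m := by exact_mod_cast hm
  have key := Real.pow_arith_mean_le_arith_mean_pow Finset.univ
      (fun _ : Fin m => 1 / (m : ℝ)) (fun i => 1 - q i)
      (fun i _ => by positivity)
      (by simp [Finset.sum_const, Finset.card_univ]; field_simp)
      (fun i _ => by show (0:ℝ) ≤ 1 - q i; have := (hq01 i).2; linarith) N
  have hsum : ∑ i : Fin m, (1 / (m : ℝ)) * (1 - q i) = 1 - (b : ℝ) / m := by
    rw [← Finset.mul_sum, Finset.sum_sub_distrib, hqsum]
    field_simp
    simp [Finset.sum_const, Finset.card_univ]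
  rw [hsum] at key
  have key2 : (m : ℝ) * (1 - (b : ℝ) / m) ^ N ≤ ∑ i : Fin m, (1 - q i) ^ N := by
    have : ∑ i : Fin m, (1 / (m : ℝ)) * (1 - q i) ^ N
        = (1 / m) * ∑ i : Fin m, (1 - q i) ^ N := by rw [Finset.mul_sum]
    rw [this] at key
    have h2 := mul_le_mul_of_nonneg_left key (le_of_lt hm0)
    calc (m : ℝ) * (1 - (b:ℝ)/m) ^ N ≤ m * (1/m * ∑ i : Fin m, (1 - q i) ^ N) := h2
      _ = ∑ i : Fin m, (1 - q i) ^ N := by field_simp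
  simp only [Finset.sum_sub_distrib, Finset.sum_const, Finset.card_univ, Fintype.card_fin,
    nsmul_eq_mul]
  linarith
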